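/- Let K be a complete nonarchimedean (ultrametric) normed field, and let f(x) = x·Σ_{k≥0} a_k x^k ∈ K[[x]] with ‖a_0‖ = 1 and ‖a_k‖ ≤ 1 for all k. Then the series f converges at every point of the open unit disk D = {x ∈ K : ‖x‖ < 1}, and its evaluation defines a bijective isometry f : D → D; in particular ‖f(x) − f(y)‖ = ‖x − y‖ for all x, y ∈ D. -/

import Mathlib

open Filter Topology

section Aux

variable {K : Type*} [NormedField K] [CompleteSpace K] [IsUltrametricDist K]

lemma aux_summable (a : ℕ → K) (ha : ∀ k, ‖a k‖ ≤ 1) {x : K} (hx : ‖x‖ < 1) :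
    Summable (fun k => a k * x ^ (k + 1)) := by
  apply NonarchimedeanAddGroup.summable_of_tendsto_cofinite_zero
  rw [Nat.cofinite_eq_atTop]
  rw [tendsto_zero_iff_norm_tendsto_zero]
  apply squeeze_zero (fun n => norm_nonneg _) (g := fun n => ‖x‖ ^ (n + 1))
  · intro n
    rw [norm_mul, norm_pow]
    calc ‖a n‖ * ‖x‖ ^ (n+1) ≤ 1 * ‖x‖ ^ (n+1) := by gcongr; exact ha n
    _ = ‖x‖ ^ (n+1) := one_mul _
  · exact (tendsto_pow_atTop_nhds_zero_of_lt_one (norm_nonneg x) hx).comp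
      (tendsto_add_atTop_nat 1)

omit [CompleteSpace K] in
lemma aux_pow_sub (x y : K) (n : ℕ) :
    ‖x ^ (n + 1) - y ^ (n + 1)‖ ≤ ‖x - y‖ * max ‖x‖ ‖y‖ ^ n := by
  set m := max ‖x‖ ‖y‖ with hm
  rw [← geom_sum₂_mul x y (n + 1), norm_mul, mul_comm]
  gcongr
  apply IsUltrametricDist.norm_sum_le_of_forall_le_of_nonneg (by positivity)
  intro i hi
  rw [Finset.mem_range] at hi
  have hi' : i ≤ n := Nat.lt_succ_iff.mp hi
  rw [norm_mul, norm_pow, norm_pow]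
  calc ‖x‖ ^ i * ‖y‖ ^ (n + 1 - 1 - i) ≤ m ^ i * m ^ (n - i) := by
        have h1 : ‖x‖ ≤ m := le_max_left _ _
        have h2 : ‖y‖ ≤ m := le_max_right _ _
        have he : n + 1 - 1 - i = n - i := by omega
        rw [he]
        exact mul_le_mul (pow_le_pow_left₀ (norm_nonneg x) h1 i)
          (pow_le_pow_left₀ (norm_nonneg y) h2 _) (by positivity) (by positivity)
    _ = m ^ n := by rw [← pow_add, Nat.add_sub_cancel' hi']

lemma aux_isometry (a : ℕ → K) (ha0 : ‖a 0‖ = 1) (ha : ∀ k, ‖a k‖ ≤ 1)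
    {x y : K} (hx : ‖x‖ < 1) (hy : ‖y‖ < 1) :
    ‖(∑' k, a k * x ^ (k + 1)) - ∑' k, a k * y ^ (k + 1)‖ = ‖x - y‖ := by
  rcases eq_or_ne x y with rfl | hxy
  · simp
  have hxy' : (0:ℝ) < ‖x - y‖ := norm_pos_iff.mpr (sub_ne_zero.mpr hxy)
  have Sx := aux_summable a ha hx
  have Sy := aux_summable a ha hy
  set m := max ‖x‖ ‖y‖ with hmdef
  have hm1 : m < 1 := max_lt hx hy
  have hm0 : (0:ℝ) ≤ m := (norm_nonneg x).trans (le_max_left _ _)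
  have S : Summable (fun k => a k * (x ^ (k+1) - y ^ (k+1))) := by
    have := Sx.sub Sy
    apply this.congr
    intro k
    ring
  have hdiff : (∑' k, a k * x ^ (k + 1)) - ∑' k, a k * y ^ (k + 1)
      = ∑' k, a k * (x ^ (k+1) - y ^ (k+1)) := by
    rw [← Summable.tsum_sub Sx Sy]
    congr 1
    funext k
    ring
  rw [hdiff, Summable.tsum_eq_zero_add S]
  have h0 : ‖a 0 * (x ^ (0+1) - y ^ (0+1))‖ = ‖x - y‖ := by
    simp [norm_mul, ha0]
  have htail : ‖∑' k, a (k+1) * (x ^ (k+1+1) - y ^ (k+1+1))‖ ≤ m * ‖x - y‖ := by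
    apply IsUltrametricDist.norm_tsum_le_of_forall_le_of_nonneg (by positivity)
    intro k
    rw [norm_mul]
    calc ‖a (k+1)‖ * ‖x ^ (k+1+1) - y ^ (k+1+1)‖
        ≤ 1 * (‖x - y‖ * m ^ (k+1)) :=
          mul_le_mul (ha _) (aux_pow_sub x y (k+1)) (norm_nonneg _) one_pos.le
      _ = ‖x - y‖ * m ^ (k+1) := one_mul _
      _ ≤ ‖x - y‖ * m := by
          gcongr
          exact pow_le_of_le_one hm0 hm1.le (Nat.succ_ne_zero k)
      _ = m * ‖x - y‖ := mul_comm _ _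
  have hlt : ‖∑' k, a (k+1) * (x ^ (k+1+1) - y ^ (k+1+1))‖ < ‖x - y‖ :=
    htail.trans_lt (by nlinarith)
  rw [IsUltrametricDist.norm_add_eq_max_of_norm_ne_norm (by exact (hlt.trans_eq h0.symm).ne'),
    h0, max_eq_left (h0 ▸ hlt.le)]

lemma aux_f_zero (a : ℕ → K) : (∑' k, a k * (0:K) ^ (k + 1)) = 0 := by
  simp

lemma aux_surj (a : ℕ → K) (ha0 : ‖a 0‖ = 1) (ha : ∀ k, ‖a k‖ ≤ 1)
    {b : K} (hb : ‖b‖ < 1) :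
    ∃ x : K, ‖x‖ < 1 ∧ (∑' k, a k * x ^ (k + 1)) = b := by
  rcases eq_or_ne b 0 with rfl | hb0
  · exact ⟨0, by simp, aux_f_zero a⟩
  have ha0' : a 0 ≠ 0 := by
    intro h
    rw [h, norm_zero] at ha0
    exact one_ne_zero ha0.symm
  set r : ℝ := ‖b‖ with hrdef
  have hr0 : 0 < r := norm_pos_iff.mpr hb0
  set g : K → K := fun z => ∑' k, a (k+1) * z ^ (k+2) with hgdef
  have hsum_g : ∀ z : K, ‖z‖ < 1 → Summable (fun k => a (k+1) * z ^ (k+2)) := by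
    intro z hz
    have h1 : ∀ k, ‖a (k+1) * z‖ ≤ 1 := fun k => by
      rw [norm_mul]
      calc ‖a (k+1)‖ * ‖z‖ ≤ 1 * 1 := mul_le_mul (ha _) hz.le (norm_nonneg z) one_pos.le
        _ = 1 := one_mul 1
    have := aux_summable (fun k => a (k+1) * z) h1 hz
    apply this.congr
    intro k
    ring
  have hfg : ∀ z : K, ‖z‖ < 1 → (∑' k, a k * z ^ (k+1)) = a 0 * z + g z := by
    intro z hz
    rw [Summable.tsum_eq_zero_add (aux_summable a ha hz)]
    norm_num [hgdef]
  -- bound on g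
  have hg_bound : ∀ z : K, ‖z‖ ≤ r → ‖g z‖ ≤ r := by
    intro z hz
    have hz1 : ‖z‖ ≤ 1 := hz.trans hb.le
    apply IsUltrametricDist.norm_tsum_le_of_forall_le_of_nonneg hr0.le
    intro k
    rw [norm_mul, norm_pow]
    calc ‖a (k+1)‖ * ‖z‖ ^ (k+2) ≤ 1 * ‖z‖ := by
          exact mul_le_mul (ha _) (pow_le_of_le_one (norm_nonneg z) hz1 (by omega))
            (by positivity) one_pos.le
      _ = ‖z‖ := one_mul _
      _ ≤ r := hz
  -- Lipschitz bound on g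
  have hg_lip : ∀ z w : K, ‖z‖ ≤ r → ‖w‖ ≤ r → ‖g z - g w‖ ≤ r * ‖z - w‖ := by
    intro z w hz hw
    have hz1 : ‖z‖ < 1 := hz.trans_lt hb
    have hw1 : ‖w‖ < 1 := hw.trans_lt hb
    have hdiff : g z - g w = ∑' k, a (k+1) * (z ^ (k+2) - w ^ (k+2)) := by
      rw [hgdef]
      simp only
      rw [← Summable.tsum_sub (hsum_g z hz1) (hsum_g w hw1)]
      congr 1
      funext k
      ring
    rw [hdiff]
    apply IsUltrametricDist.norm_tsum_le_of_forall_le_of_nonneg (by positivity)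
    intro k
    set m := max ‖z‖ ‖w‖ with hm
    have hm0 : (0:ℝ) ≤ m := (norm_nonneg z).trans (le_max_left _ _)
    have hmr : m ≤ r := max_le hz hw
    have hm1 : m ≤ 1 := hmr.trans hb.le
    rw [norm_mul]
    calc ‖a (k+1)‖ * ‖z ^ (k+2) - w ^ (k+2)‖
        ≤ 1 * (‖z - w‖ * m ^ (k+1)) :=
          mul_le_mul (ha _) (aux_pow_sub z w (k+1)) (norm_nonneg _) one_pos.le
      _ = ‖z - w‖ * m ^ (k+1) := one_mul _
      _ ≤ ‖z - w‖ * r := by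
          gcongr
          exact (pow_le_of_le_one hm0 hm1 (Nat.succ_ne_zero k)).trans hmr
      _ = r * ‖z - w‖ := mul_comm _ _
  -- set up the contraction on the closed ball
  have hainv : ‖(a 0)⁻¹‖ = 1 := by rw [norm_inv, ha0, inv_one]
  haveI : CompleteSpace (Metric.closedBall (0:K) r) :=
    IsClosed.completeSpace_coe (hs := Metric.isClosed_closedBall)
  haveI : Nonempty (Metric.closedBall (0:K) r) :=
    ⟨⟨0, by simp [Metric.mem_closedBall, hr0.le]⟩⟩
  have hTmem : ∀ z : Metric.closedBall (0:K) r,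
      (a 0)⁻¹ * (b - g z.1) ∈ Metric.closedBall (0:K) r := by
    intro z
    have hz : ‖z.1‖ ≤ r := mem_closedBall_zero_iff.mp z.2
    rw [mem_closedBall_zero_iff, norm_mul, hainv, one_mul, sub_eq_add_neg]
    refine (IsUltrametricDist.norm_add_le_max _ _).trans (max_le le_rfl ?_)
    rw [norm_neg]
    exact hg_bound z.1 hz
  set T : Metric.closedBall (0:K) r → Metric.closedBall (0:K) r :=
    fun z => ⟨(a 0)⁻¹ * (b - g z.1), hTmem z⟩ with hT
  have hcontr : ContractingWith ‖b‖₊ T := by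
    constructor
    · exact_mod_cast hb
    · apply LipschitzWith.of_dist_le_mul
      intro z w
      have hz : ‖z.1‖ ≤ r := mem_closedBall_zero_iff.mp z.2
      have hw : ‖w.1‖ ≤ r := mem_closedBall_zero_iff.mp w.2
      simp only [Subtype.dist_eq, dist_eq_norm]
      show ‖(a 0)⁻¹ * (b - g z.1) - (a 0)⁻¹ * (b - g w.1)‖ ≤ ‖b‖₊ * ‖z.1 - w.1‖
      rw [← mul_sub, norm_mul, hainv, one_mul, sub_sub_sub_cancel_left]
      calc ‖g w.1 - g z.1‖ ≤ r * ‖w.1 - z.1‖ := hg_lip w.1 z.1 hw hz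
        _ = ‖b‖₊ * ‖z.1 - w.1‖ := by rw [norm_sub_rev]; norm_cast
  obtain ⟨c, hc⟩ : ∃ c : Metric.closedBall (0:K) r, T c = c :=
    ⟨_, hcontr.fixedPoint_isFixedPt⟩
  refine ⟨c.1, (mem_closedBall_zero_iff.mp c.2).trans_lt hb, ?_⟩
  have hc1 : ‖c.1‖ < 1 := (mem_closedBall_zero_iff.mp c.2).trans_lt hb
  have heq : (a 0)⁻¹ * (b - g c.1) = c.1 := congrArg Subtype.val hc
  have heq2 : b - g c.1 = a 0 * c.1 := by
    have h2 := congrArg (fun t => a 0 * t) heq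
    simpa [← mul_assoc, mul_inv_cancel₀ ha0', one_mul] using h2
  rw [hfg c.1 hc1, ← heq2]
  ring

end Aux

/-- If `f(x) = x ∑ a_k x^k` with `‖a_0‖ = 1` and all
`‖a_k‖ ≤ 1` over a complete nonarchimedean normed field, then `f` converges on
the open unit disk and defines a bijective isometry of the disk to itself. -/
theorem isometry_of_integral_coeffs {K : Type*} [NormedField K] [CompleteSpace K]
    [IsUltrametricDist K]
    (a : ℕ → K) (ha0 : ‖a 0‖ = 1) (ha : ∀ k, ‖a k‖ ≤ 1) :
    ∃ F : {x : K // ‖x‖ < 1} → {x : K // ‖x‖ < 1},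
      Function.Bijective F ∧
      (∀ x : {x : K // ‖x‖ < 1},
        HasSum (fun k => a k * (x : K) ^ (k + 1)) (F x : K)) ∧
      ∀ x y : {x : K // ‖x‖ < 1}, ‖(F x : K) - (F y : K)‖ = ‖(x : K) - (y : K)‖ := by
  have hmem : ∀ x : K, ‖x‖ < 1 → ‖∑' k, a k * x ^ (k + 1)‖ < 1 := by
    intro x hx
    have h := aux_isometry a ha0 ha hx (show ‖(0:K)‖ < 1 by simp)
    rw [aux_f_zero a, sub_zero, sub_zero] at h
    rw [h]; exact hx
  refine ⟨fun x => ⟨∑' k, a k * (x:K) ^ (k+1), hmem x.1 x.2⟩, ⟨?_, ?_⟩, ?_, ?_⟩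
  · intro x y h
    have h2 : (∑' k, a k * (x:K) ^ (k+1)) = ∑' k, a k * (y:K) ^ (k+1) :=
      congrArg Subtype.val h
    have h3 := aux_isometry a ha0 ha x.2 y.2
    rw [h2, sub_self, norm_zero] at h3
    exact Subtype.ext (sub_eq_zero.mp (norm_eq_zero.mp h3.symm))
  · intro y
    obtain ⟨x, hx1, hx2⟩ := aux_surj a ha0 ha y.2
    exact ⟨⟨x, hx1⟩, Subtype.ext hx2⟩
  · intro x
    exact (aux_summable a ha x.2).hasSum
  · intro x y
    exact aux_isometry a ha0 ha x.2 y.2
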